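/- For b ≥ 1, the generating-function identity 1 + s·e/(1 - p) = ((1-y)² + xy - xy^{b+1} - xy^{b+2} + xy^{2b+2}) / ((1-y)(1 - y - xy^{b+1} + xy^{2b+2})) holds as an identity of rational functions, where p = x(y^{b+1} + y^{b+2} + ⋯ + y^{2b+1}), s = 1 + y + ⋯ + y^b, and e = x(y + y² + ⋯ + y^{b+1}). -/

import Mathlib

open Finset

lemma shift_sum (a n : ℕ) (y : ℝ) :
    ∑ i ∈ Finset.Icc a (a + n), y ^ i = y ^ a * ∑ i ∈ Finset.range (n + 1), y ^ i := by
  rw [← Finset.Ico_add_one_right_eq_Icc, Finset.sum_Ico_eq_sum_range, Finset.mul_sum]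
  rw [show a + n + 1 - a = n + 1 from by omega]
  simp [pow_add]

theorem stmt1 (b : ℕ) (hb : 1 ≤ b) (x y : ℝ)
    (h1 : (1 : ℝ) - y ≠ 0)
    (hp : (1 : ℝ) - x * ∑ i ∈ Finset.Icc (b + 1) (2 * b + 1), y ^ i ≠ 0)
    (hd : (1 : ℝ) - y - x * y ^ (b + 1) + x * y ^ (2 * b + 2) ≠ 0) :
    1 + (∑ i ∈ Finset.range (b + 1), y ^ i) * (x * ∑ i ∈ Finset.Icc 1 (b + 1), y ^ i) /
        (1 - x * ∑ i ∈ Finset.Icc (b + 1) (2 * b + 1), y ^ i) =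
      ((1 - y) ^ 2 + x * y - x * y ^ (b + 1) - x * y ^ (b + 2) + x * y ^ (2 * b + 2)) /
        ((1 - y) * (1 - y - x * y ^ (b + 1) + x * y ^ (2 * b + 2))) := by
  have e1 : ∑ i ∈ Finset.Icc 1 (b + 1), y ^ i = y ^ 1 * ∑ i ∈ Finset.range (b + 1), y ^ i := by
    have := shift_sum 1 b y
    rwa [show 1 + b = b + 1 from by ring] at this
  have e2 : ∑ i ∈ Finset.Icc (b + 1) (2 * b + 1), y ^ i
      = y ^ (b + 1) * ∑ i ∈ Finset.range (b + 1), y ^ i := by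
    have := shift_sum (b + 1) b y
    rwa [show b + 1 + b = 2 * b + 1 from by ring] at this
  have hG : (1 - y) * ∑ i ∈ Finset.range (b + 1), y ^ i = 1 - y ^ (b + 1) := by
    have := geom_sum_mul y (b + 1)
    nlinarith [this]
  have hz2 : y ^ (2 * b + 2) = (y ^ (b + 1)) ^ 2 := by rw [← pow_mul]; ring_nf
  have hz1 : y ^ (b + 2) = y * y ^ (b + 1) := by rw [← pow_succ']
  rw [e2] at hp
  rw [e1, e2, hz1, hz2]
  rw [hz2] at hd
  have hGval : (∑ i ∈ Finset.range (b + 1), y ^ i) = (1 - y ^ (b + 1)) / (1 - y) := by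
    field_simp
    linarith [hG]
  rw [hGval] at hp ⊢
  set z := y ^ (b + 1) with hzdef
  have hp' : (1 : ℝ) - y - x * (z * (1 - z)) ≠ 0 := by
    intro h; apply hp
    field_simp
    linarith [h]
  have hp'' : (1 : ℝ) - y - z * (1 - z) * x ≠ 0 := by
    intro h; apply hp'; linarith [h]
  have hd' : (1 : ℝ) - y - z * x + z ^ 2 * x ≠ 0 := by
    intro h; apply hd; linarith [h]
  field_simp
  ring
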